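/- arXiv:2003.13651 — 3 statements merged into one kernel-verified Lean document; each statement's English description precedes it below -/
import Mathlib

section
/- In the logic QRC₁, for any formula φ and variables x, y such that y is free for x in φ and y∉fv(φ), the sequent ∀xφ ⊢ ∀y(φ[x/y]) is derivable. -/
/-- A signature: constants and relation symbols with arities (no function symbols). -/
structure Signature where
  Const : Type
  Rel : Type
  arity : Rel → ℕ

/-- Terms: variables (numbered) or constants. -/
inductive Term (Sig : Signature) : Type where
  | var : ℕ → Term Sig
  | const : Sig.Const → Term Sig

/-- Strictly positive formulas of QRC₁. -/
inductive Formula (Sig : Signature) : Type where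
  | top : Formula Sig
  | rel : (S : Sig.Rel) → (Fin (Sig.arity S) → Term Sig) → Formula Sig
  | and : Formula Sig → Formula Sig → Formula Sig
  | dia : Formula Sig → Formula Sig
  | all : ℕ → Formula Sig → Formula Sig

namespace Term

variable {Sig : Signature}

def fv : Term Sig → Set ℕ
  | var x => {x}
  | const _ => ∅

def consts : Term Sig → Set Sig.Const
  | var _ => ∅
  | const c => {c}

def subst (t : Term Sig) (x : ℕ) (u : Term Sig) : Term Sig :=
  match t with
  | var y => if y = x then u else var y
  | const c => const c

end Term

namespace Formula

variable {Sig : Signature}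

/-- Free variables of a formula. -/
def fv : Formula Sig → Set ℕ
  | top => ∅
  | rel _ ts => ⋃ i, (ts i).fv
  | and φ ψ => φ.fv ∪ ψ.fv
  | dia φ => φ.fv
  | all x φ => φ.fv \ {x}

/-- Constants occurring in a formula. -/
def consts : Formula Sig → Set Sig.Const
  | top => ∅
  | rel _ ts => ⋃ i, (ts i).consts
  | and φ ψ => φ.consts ∪ ψ.consts
  | dia φ => φ.consts
  | all _ φ => φ.consts

/-- Simultaneous substitution of the term `u` for the free occurrences of `x`. -/
def subst : Formula Sig → ℕ → Term Sig → Formula Sig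
  | top, _, _ => top
  | rel S ts, x, u => rel S (fun i => (ts i).subst x u)
  | and φ ψ, x, u => and (φ.subst x u) (ψ.subst x u)
  | dia φ, x, u => dia (φ.subst x u)
  | all y φ, x, u => if y = x then all y φ else all y (φ.subst x u)

/-- `t` is free for `x` in `φ`: no free variable of `t` becomes bound in `φ[x/t]`. -/
def freeFor : Formula Sig → ℕ → Term Sig → Prop
  | top, _, _ => True
  | rel _ _, _, _ => True
  | and φ ψ, x, t => φ.freeFor x t ∧ ψ.freeFor x t
  | dia φ, x, t => φ.freeFor x t
  | all y φ, x, t => x ∉ (Formula.all y φ).fv ∨ (y ∉ t.fv ∧ φ.freeFor x t)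

/-- Modal depth. -/
def mdepth : Formula Sig → ℕ
  | top => 0
  | rel _ _ => 0
  | and φ ψ => max φ.mdepth ψ.mdepth
  | dia φ => φ.mdepth + 1
  | all _ φ => φ.mdepth

def size : Formula Sig → ℕ
  | top => 1
  | rel _ _ => 1
  | and φ ψ => φ.size + ψ.size + 1
  | dia φ => φ.size + 1
  | all _ φ => φ.size + 1

theorem size_subst (φ : Formula Sig) (x : ℕ) (t : Term Sig) :
    (φ.subst x t).size = φ.size := by
  induction φ with
  | top => rfl
  | rel S ts => rfl
  | and φ ψ ihφ ihψ => simp [Formula.subst, Formula.size, ihφ, ihψ]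
  | dia φ ih => simp [Formula.subst, Formula.size, ih]
  | all y φ ih =>
      by_cases h : y = x <;> simp [Formula.subst, Formula.size, h, ih]

end Formula

/-- Derivability of sequents `φ ⊢ ψ` in QRC₁. -/
inductive Derives {Sig : Signature} : Formula Sig → Formula Sig → Prop where
  | topIntro (φ : Formula Sig) : Derives φ .top
  | refl (φ : Formula Sig) : Derives φ φ
  | andE₁ (φ ψ : Formula Sig) : Derives (.and φ ψ) φ
  | andE₂ (φ ψ : Formula Sig) : Derives (.and φ ψ) ψ
  | andI {φ ψ χ : Formula Sig} : Derives φ ψ → Derives φ χ → Derives φ (.and ψ χ)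
  | cut {φ ψ χ : Formula Sig} : Derives φ ψ → Derives ψ χ → Derives φ χ
  | nec {φ ψ : Formula Sig} : Derives φ ψ → Derives (.dia φ) (.dia ψ)
  | diaTrans (φ : Formula Sig) : Derives (.dia (.dia φ)) (.dia φ)
  | diaAll (x : ℕ) (φ : Formula Sig) : Derives (.dia (.all x φ)) (.all x (.dia φ))
  | allR {φ ψ : Formula Sig} {x : ℕ} : Derives φ ψ → x ∉ φ.fv → Derives φ (.all x ψ)
  | allL {φ ψ : Formula Sig} {x : ℕ} {t : Term Sig} :
      Derives (φ.subst x t) ψ → φ.freeFor x t → Derives (.all x φ) ψ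
  | termInst {φ ψ : Formula Sig} {x : ℕ} {t : Term Sig} :
      Derives φ ψ → φ.freeFor x t → ψ.freeFor x t →
      Derives (φ.subst x t) (ψ.subst x t)
  | constGen {φ ψ : Formula Sig} {x : ℕ} {c : Sig.Const} :
      Derives (φ.subst x (.const c)) (ψ.subst x (.const c)) →
      c ∉ φ.consts → c ∉ ψ.consts → Derives φ ψ

/-- Extension of a signature by a collection `C` of new constants. -/
def Signature.extend (Sig : Signature) (C : Type) : Signature :=
  ⟨Sig.Const ⊕ C, Sig.Rel, Sig.arity⟩

/-- A term of `Sig` seen as a term of the extended signature. -/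
def Term.lift {Sig : Signature} {C : Type} : Term Sig → Term (Sig.extend C)
  | .var x => .var x
  | .const c => .const (Sum.inl c)

/-- A formula of `Sig` seen as a formula of the extended signature. -/
def Formula.lift {Sig : Signature} {C : Type} : Formula Sig → Formula (Sig.extend C)
  | .top => .top
  | .rel S ts => .rel S (fun i => (ts i).lift)
  | .and φ ψ => .and φ.lift ψ.lift
  | .dia φ => .dia φ.lift
  | .all x φ => .all x φ.lift

/-! ### Relational semantics -/

/-- A relational model (on an underlying frame `⟨W, R, D⟩`):
worlds, accessibility, finite domains, constant and relation interpretations. -/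
structure Model (Sig : Signature) where
  W : Type
  U : Type
  nonempty : Nonempty W
  R : W → W → Prop
  D : W → Set U
  Dfin : ∀ w, (D w).Finite
  I : W → Sig.Const → U
  Imem : ∀ w c, I w c ∈ D w
  J : (w : W) → (S : Sig.Rel) → Set (Fin (Sig.arity S) → U)
  Jmem : ∀ w S f, f ∈ J w S → ∀ i, f i ∈ D w

namespace Model

variable {Sig : Signature}

/-- A `w`-assignment: a map from variables into the domain of `w`. -/
def IsAssignment (M : Model Sig) (w : M.W) (g : ℕ → M.U) : Prop :=
  ∀ n, g n ∈ M.D w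

/-- Value of a term at a world under an assignment. -/
def tval (M : Model Sig) (w : M.W) (g : ℕ → M.U) : Term Sig → M.U
  | .var x => g x
  | .const c => M.I w c

end Model

/-- `Γ`-alternative assignments: they agree on all variables outside `Γ`. -/
def AltOn {U : Type} (Γ : Set ℕ) (g h : ℕ → U) : Prop :=
  ∀ y, y ∉ Γ → g y = h y

/-- Truth at a world under an assignment. -/
def Model.Forces {Sig : Signature} (M : Model Sig) :
    M.W → (ℕ → M.U) → Formula Sig → Prop
  | _, _, .top => True
  | w, g, .rel S ts => (fun i => M.tval w g (ts i)) ∈ M.J w S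
  | w, g, .and φ ψ => M.Forces w g φ ∧ M.Forces w g ψ
  | w, g, .dia φ => ∃ v, M.R w v ∧ M.Forces v g φ
  | w, g, .all x φ =>
      ∀ h : ℕ → M.U, M.IsAssignment w h → AltOn {x} g h → M.Forces w h φ

/-- Adequate models: inclusive, transitive, and concordant. -/
def Model.Adequate {Sig : Signature} (M : Model Sig) : Prop :=
  (∀ w u, M.R w u → M.D w ⊆ M.D u) ∧
  (∀ w u v, M.R w u → M.R u v → M.R w v) ∧
  (∀ w u, M.R w u → ∀ c, M.I w c = M.I u c)

/-- The model `M` restricted at the world `r`. -/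
def Model.restrict {Sig : Signature} (M : Model Sig) (r : M.W) : Model Sig where
  W := {w : M.W // w = r ∨ M.R r w}
  U := M.U
  nonempty := ⟨⟨r, Or.inl rfl⟩⟩
  R w v := M.R w.1 v.1
  D w := M.D w.1
  Dfin w := M.Dfin w.1
  I w c := M.I w.1 c
  Imem w c := M.Imem w.1 c
  J w S := M.J w.1 S
  Jmem w S f h i := M.Jmem w.1 S f h i

/-- The model `M` restricted at `r`, with the interpretation of the constant `c`
set to `d ∈ M_r` at every world. -/
noncomputable def Model.restrictSubst {Sig : Signature} (M : Model Sig) (r : M.W) (c : Sig.Const)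
    (d : M.U) (hd : d ∈ M.D r) (hinc : ∀ w u, M.R w u → M.D w ⊆ M.D u) : Model Sig :=
  { M.restrict r with
    I := fun w c' => @ite _ (c' = c) (Classical.propDecidable _) d (M.I w.1 c')
    Imem := by
      intro w c'
      by_cases h : c' = c
      · simp only [h, if_pos rfl]
        rcases w.2 with h' | h'
        · show d ∈ M.D w.1; rw [h']; exact hd
        · exact hinc r w.1 h' hd
      · show (@ite _ (c' = c) (Classical.propDecidable _) d (M.I w.1 c')) ∈ M.D w.1
        rw [if_neg h]
        exact M.Imem w.1 c' }

/-! ### Pairs, closure, maximal consistency -/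

/-- A pair of sets of formulas (positive and negative part). -/
structure Pair (Sig : Signature) where
  pos : Set (Formula Sig)
  neg : Set (Formula Sig)

/-- `Γ ⊢ φ`: some finite conjunction of members of `Γ` derives `φ`. -/
def SetDerives {Sig : Signature} (Γ : Set (Formula Sig)) (φ : Formula Sig) : Prop :=
  ∃ (γ : Formula Sig) (l : List (Formula Sig)),
    γ ∈ Γ ∧ (∀ δ ∈ l, δ ∈ Γ) ∧ Derives (l.foldl Formula.and γ) φ

namespace Pair

variable {Sig : Signature}

/-- A pair is consistent if no member of the negative part follows from the positive part. -/
def Consistent (p : Pair Sig) : Prop :=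
  ∀ δ ∈ p.neg, ¬ SetDerives p.pos δ

/-- `q` is a `Φ`-extension of `p`. -/
def Ext (p q : Pair Sig) (Φ : Set (Formula Sig)) : Prop :=
  p.pos ⊆ q.pos ∧ q.pos ⊆ Φ ∧ p.neg ⊆ q.neg ∧ q.neg ⊆ Φ

/-- `Φ`-maximal consistency. -/
def MaxCons (p : Pair Sig) (Φ : Set (Formula Sig)) : Prop :=
  p.Consistent ∧ p.pos ⊆ Φ ∧ p.neg ⊆ Φ ∧
    ∀ q : Pair Sig, p.Ext q Φ → q.Consistent → q = p

/-- A pair is fully witnessed if every negative universal has a constant witness. -/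
def FullyWitnessed (p : Pair Sig) : Prop :=
  ∀ (x : ℕ) (φ : Formula Sig), Formula.all x φ ∈ p.neg →
    ∃ c : Sig.Const, φ.subst x (.const c) ∈ p.neg

end Pair

/-- Closure of a formula under a set of constants. -/
def Cl {Sig : Signature} (C : Set Sig.Const) : Formula Sig → Set (Formula Sig)
  | .top => {.top}
  | .rel S ts => {.rel S ts, .top}
  | .and φ ψ => {.and φ ψ} ∪ Cl C φ ∪ Cl C ψ
  | .dia φ => {.dia φ} ∪ Cl C φ
  | .all x φ => {.all x φ} ∪ ⋃ c ∈ C, Cl C (φ.subst x (.const c))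
termination_by φ => φ.size
decreasing_by
  all_goals simp [Formula.size, Formula.size_subst]
  all_goals omega

/-- Closure of a set of formulas under a set of constants. -/
def ClSet {Sig : Signature} (C : Set Sig.Const) (Γ : Set (Formula Sig)) :
    Set (Formula Sig) :=
  ⋃ φ ∈ Γ, Cl C φ

/-- Modal depth of a set of formulas (as a supremum in ℕ). -/
noncomputable def mdepthSet {Sig : Signature} (Γ : Set (Formula Sig)) : ℕ :=
  sSup (Formula.mdepth '' Γ)

/-- The relation `R̂` between pairs. -/
def hatR {Sig : Signature} (p q : Pair Sig) : Prop :=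
  (∀ φ : Formula Sig, Formula.dia φ ∈ p.neg → φ ∈ q.neg ∧ Formula.dia φ ∈ q.neg) ∧
  (∃ ψ : Formula Sig, Formula.dia ψ ∈ p.pos ∧ Formula.dia ψ ∈ q.neg)

/-- In QRC₁, if y is free for x in φ and y ∉ fv(φ), then
∀xφ ⊢ ∀y(φ[x/y]) is derivable. -/
theorem qrc1_alpha_rename (Sig : Signature) (φ : Formula Sig) (x y : ℕ)
    (h1 : φ.freeFor x (Term.var y)) (h2 : y ∉ φ.fv) :
    Derives (Formula.all x φ) (Formula.all y (φ.subst x (Term.var y))) := by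
  refine Derives.allR (Derives.allL (Derives.refl _) h1) ?_
  simp only [Formula.fv, Set.mem_diff, Set.mem_singleton_iff]
  intro h
  exact h2 h.1
end

section
/- Relational soundness of QRC₁: if φ ⊢ ψ is derivable in QRC₁, then for every adequate relational model M, every world w of M, and every w-assignment g, if M,w ⊩^g φ then M,w ⊩^g ψ. -/
/-! ### Auxiliary lemmas for soundness -/

section SoundnessAux

variable {Sig : Signature}

lemma tval_mem {M : Model Sig} {w : M.W} {g : ℕ → M.U} (hg : M.IsAssignment w g)
    (t : Term Sig) : M.tval w g t ∈ M.D w := by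
  cases t with
  | var y => exact hg y
  | const c => exact M.Imem w c

lemma tval_congr {M : Model Sig} {w : M.W} {g h : ℕ → M.U} (t : Term Sig)
    (hgh : ∀ z ∈ t.fv, g z = h z) : M.tval w g t = M.tval w h t := by
  cases t with
  | var y => exact hgh y rfl
  | const c => rfl

lemma isAssignment_mono {M : Model Sig} (hM : M.Adequate) {w v : M.W} {g : ℕ → M.U}
    (hwv : M.R w v) (hg : M.IsAssignment w g) : M.IsAssignment v g :=
  fun n => hM.1 w v hwv (hg n)

lemma tval_mono {M : Model Sig} (hM : M.Adequate) {w v : M.W} {g : ℕ → M.U}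
    (hwv : M.R w v) (t : Term Sig) : M.tval w g t = M.tval v g t := by
  cases t with
  | var y => rfl
  | const c => exact hM.2.2 w v hwv c

lemma isAssignment_update {M : Model Sig} {w : M.W} {g : ℕ → M.U}
    (hg : M.IsAssignment w g) {x : ℕ} {d : M.U} (hd : d ∈ M.D w) :
    M.IsAssignment w (Function.update g x d) := by
  intro n
  by_cases h : n = x
  · subst h; simpa using hd
  · simpa [Function.update_apply, h] using hg n

lemma forces_fv {M : Model Sig} (hM : M.Adequate) (φ : Formula Sig) :
    ∀ (w : M.W) (g h : ℕ → M.U), M.IsAssignment w g → M.IsAssignment w h →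
      (∀ z ∈ φ.fv, g z = h z) → M.Forces w g φ → M.Forces w h φ := by
  induction φ with
  | top => intro _ _ _ _ _ _ _; trivial
  | rel S ts =>
      intro w g h hg hh hgh H
      show (fun i => M.tval w h (ts i)) ∈ M.J w S
      have he : (fun i => M.tval w h (ts i)) = fun i => M.tval w g (ts i) := by
        funext i
        exact (tval_congr (ts i) fun z hz => hgh z (Set.mem_iUnion.2 ⟨i, hz⟩)).symm
      rw [he]; exact H
  | and φ ψ ihφ ihψ =>
      intro w g h hg hh hgh H
      exact ⟨ihφ w g h hg hh (fun z hz => hgh z (Or.inl hz)) H.1,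
             ihψ w g h hg hh (fun z hz => hgh z (Or.inr hz)) H.2⟩
  | dia φ ih =>
      intro w g h hg hh hgh H
      obtain ⟨v, hwv, Hv⟩ := H
      exact ⟨v, hwv, ih v g h (isAssignment_mono hM hwv hg)
        (isAssignment_mono hM hwv hh) hgh Hv⟩
  | all x φ ih =>
      intro w g h hg hh hgh H k hk hkalt
      have hk' : M.IsAssignment w (Function.update g x (k x)) :=
        isAssignment_update hg (hk x)
      have halt : AltOn {x} g (Function.update g x (k x)) := by
        intro z hz
        have hzx : z ≠ x := by simpa using hz
        simp [Function.update_apply, hzx]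
      have H1 : M.Forces w (Function.update g x (k x)) φ :=
        H (Function.update g x (k x)) hk' halt
      refine ih w _ k hk' hk ?_ H1
      intro z hz
      by_cases hzx : z = x
      · subst hzx; simp [Function.update_apply]
      · simp only [Function.update_apply, if_neg hzx]
        have h1 : g z = h z := hgh z ⟨hz, by simp [hzx]⟩
        have h2 : h z = k z := hkalt z (by simp [hzx])
        rw [h1, h2]

lemma Term.subst_of_not_fv {t : Term Sig} {x : ℕ} (u : Term Sig) (h : x ∉ t.fv) :
    t.subst x u = t := by
  cases t with
  | var y =>
      have hyx : y ≠ x := fun e => h (by simp [e, Term.fv])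
      simp [Term.subst, hyx]
  | const c => rfl

lemma Formula.subst_of_not_fv {φ : Formula Sig} {x : ℕ} (u : Term Sig) (h : x ∉ φ.fv) :
    φ.subst x u = φ := by
  induction φ with
  | top => rfl
  | rel S ts =>
      show Formula.rel S _ = _
      congr 1
      funext i
      exact Term.subst_of_not_fv u (fun hx => h (Set.mem_iUnion.2 ⟨i, hx⟩))
  | and φ ψ ihφ ihψ =>
      show Formula.and _ _ = _
      rw [ihφ (fun hx => h (Or.inl hx)), ihψ (fun hx => h (Or.inr hx))]
  | dia φ ih =>
      show Formula.dia _ = _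
      rw [ih h]
  | all y φ ih =>
      by_cases hyx : y = x
      · simp [Formula.subst, hyx]
      · have hx : x ∉ φ.fv := fun hx =>
          h ⟨hx, by simp only [Set.mem_singleton_iff]; exact fun e => hyx e.symm⟩
        simp [Formula.subst, hyx, ih hx]

lemma Formula.freeFor_const (φ : Formula Sig) (x : ℕ) (c : Sig.Const) :
    φ.freeFor x (Term.const c) := by
  induction φ with
  | top => trivial
  | rel S ts => trivial
  | and φ ψ ih1 ih2 => exact ⟨ih1, ih2⟩
  | dia φ ih => exact ih
  | all y φ ih => exact Or.inr ⟨by simp [Term.fv], ih⟩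

lemma forces_subst {M : Model Sig} (hM : M.Adequate) (φ : Formula Sig) (x : ℕ)
    (t : Term Sig) :
    ∀ (w : M.W) (g : ℕ → M.U), φ.freeFor x t → M.IsAssignment w g →
      (M.Forces w g (φ.subst x t) ↔
        M.Forces w (Function.update g x (M.tval w g t)) φ) := by
  induction φ with
  | top => intro w g _ _; exact Iff.rfl
  | rel S ts =>
      intro w g _ _
      show (fun i => M.tval w g ((ts i).subst x t)) ∈ M.J w S ↔
        (fun i => M.tval w (Function.update g x (M.tval w g t)) (ts i)) ∈ M.J w S
      have he : (fun i => M.tval w g ((ts i).subst x t)) =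
          fun i => M.tval w (Function.update g x (M.tval w g t)) (ts i) := by
        funext i
        cases ts i with
        | var y =>
            by_cases hyx : y = x <;>
              simp [Term.subst, Model.tval, Function.update_apply, hyx]
        | const c => rfl
      rw [he]
  | and φ ψ ihφ ihψ =>
      intro w g hff hg
      exact and_congr (ihφ w g hff.1 hg) (ihψ w g hff.2 hg)
  | dia φ ih =>
      intro w g hff hg
      constructor
      · rintro ⟨v, hwv, Hv⟩
        refine ⟨v, hwv, ?_⟩
        have := (ih v g hff (isAssignment_mono hM hwv hg)).1 Hv
        rwa [tval_mono hM hwv t]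
      · rintro ⟨v, hwv, Hv⟩
        refine ⟨v, hwv, ?_⟩
        rw [tval_mono hM hwv t] at Hv
        exact (ih v g hff (isAssignment_mono hM hwv hg)).2 Hv
  | all y φ ih =>
      intro w g hff hg
      by_cases hyx : y = x
      · subst hyx
        rw [show (Formula.all y φ).subst y t = Formula.all y φ by simp [Formula.subst]]
        constructor
        · intro H k hk hkalt
          refine H k hk ?_
          intro z hz
          have hzx : z ≠ y := by simpa using hz
          have := hkalt z hz
          rwa [Function.update_apply, if_neg hzx] at this
        · intro H k hk hkalt
          refine H k hk ?_
          intro z hz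
          have hzx : z ≠ y := by simpa using hz
          rw [Function.update_apply, if_neg hzx]
          exact hkalt z hz
      · have hsub : (Formula.all y φ).subst x t = Formula.all y (φ.subst x t) := by
          simp [Formula.subst, hyx]
        rw [hsub]
        have hxy : x ≠ y := fun e => hyx e.symm
        rcases hff with hnfv | ⟨hyt, hffφ⟩
        · -- x not free in all y φ
          have hxφ : x ∉ φ.fv := fun hx => hnfv ⟨hx, by simp [hxy]⟩
          rw [Formula.subst_of_not_fv t hxφ]
          have hd : M.tval w g t ∈ M.D w := tval_mem hg t
          constructor
          · intro H
            refine forces_fv hM (Formula.all y φ) w g _ hg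
              (isAssignment_update hg hd) ?_ H
            intro z hz
            have hzx : z ≠ x := fun e => hxφ (e ▸ hz.1)
            rw [Function.update_apply, if_neg hzx]
          · intro H
            refine forces_fv hM (Formula.all y φ) w _ g
              (isAssignment_update hg hd) hg ?_ H
            intro z hz
            have hzx : z ≠ x := fun e => hxφ (e ▸ hz.1)
            rw [Function.update_apply, if_neg hzx]
        · constructor
          · intro H k hk hkalt
            -- goal: M.Forces w k φ
            have hkx : k x = M.tval w g t := by
              have := hkalt x (by simp [hxy])
              rw [Function.update_apply, if_pos rfl] at this
              exact this.symm
            set k' := Function.update k x (g x) with hk'def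
            have hk' : M.IsAssignment w k' := isAssignment_update hk (hg x)
            have hk'alt : AltOn {y} g k' := by
              intro z hz
              by_cases hzx : z = x
              · subst hzx; simp [hk'def, Function.update_apply]
              · have := hkalt z hz
                rw [Function.update_apply, if_neg hzx] at this
                rw [hk'def, Function.update_apply, if_neg hzx]
                exact this
            have H1 : M.Forces w k' (φ.subst x t) := H k' hk' hk'alt
            have H2 := (ih w k' hffφ hk').1 H1
            have htv : M.tval w k' t = M.tval w g t := by
              refine tval_congr t ?_
              intro z hz
              by_cases hzx : z = x
              · subst hzx; simp [hk'def, Function.update_apply]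
              · have hzy : z ≠ y := fun e => hyt (e ▸ hz)
                have h1 := hkalt z (by simp [hzy])
                rw [Function.update_apply, if_neg hzx] at h1
                rw [hk'def, Function.update_apply, if_neg hzx]
                exact h1.symm ▸ rfl
            rw [htv] at H2
            have hupd : Function.update k' x (M.tval w g t) = k := by
              rw [hk'def, Function.update_idem, ← hkx, Function.update_eq_self]
            rwa [hupd] at H2
          · intro H k hk hkalt
            -- goal: M.Forces w k (φ.subst x t)
            have htv : M.tval w k t = M.tval w g t := by
              refine tval_congr t ?_
              intro z hz
              have hzy : z ≠ y := fun e => hyt (e ▸ hz)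
              exact (hkalt z (by simp [hzy])).symm
            refine (ih w k hffφ hk).2 ?_
            have hd : M.tval w k t ∈ M.D w := tval_mem hk t
            refine H (Function.update k x (M.tval w k t))
              (isAssignment_update hk hd) ?_
            intro z hz
            by_cases hzx : z = x
            · subst hzx
              simp only [Function.update_apply, if_pos rfl]
              exact htv.symm
            · simp only [Function.update_apply, if_neg hzx]
              exact hkalt z hz

lemma restrictSubst_adequate {M : Model Sig} (hM : M.Adequate) (r : M.W)
    (c : Sig.Const) (d : M.U) (hd : d ∈ M.D r) :
    (M.restrictSubst r c d hd hM.1).Adequate := by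
  refine ⟨?_, ?_, ?_⟩
  · intro w u hwu; exact hM.1 w.1 u.1 hwu
  · intro w u v h1 h2; exact hM.2.1 w.1 u.1 v.1 h1 h2
  · intro w u hwu c'
    show (@ite _ (c' = c) (Classical.propDecidable _) d (M.I w.1 c')) =
      (@ite _ (c' = c) (Classical.propDecidable _) d (M.I u.1 c'))
    by_cases h : c' = c
    · rw [if_pos h, if_pos h]
    · rw [if_neg h, if_neg h]
      exact hM.2.2 w.1 u.1 hwu c'

lemma restrictSubst_forces {M : Model Sig} (hM : M.Adequate) (r : M.W)
    (c : Sig.Const) (d : M.U) (hd : d ∈ M.D r) (χ : Formula Sig) :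
    ∀ (w : (M.restrictSubst r c d hd hM.1).W) (g : ℕ → M.U), c ∉ χ.consts →
      ((M.restrictSubst r c d hd hM.1).Forces w g χ ↔ M.Forces w.1 g χ) := by
  induction χ with
  | top => intro w g _; exact Iff.rfl
  | rel S ts =>
      intro w g hc
      show (fun i => (M.restrictSubst r c d hd hM.1).tval w g (ts i)) ∈ M.J w.1 S ↔
        (fun i => M.tval w.1 g (ts i)) ∈ M.J w.1 S
      have he : (fun i => (M.restrictSubst r c d hd hM.1).tval w g (ts i)) =
          fun i => M.tval w.1 g (ts i) := by
        funext i
        cases hts : ts i with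
        | var y => rfl
        | const c' =>
            have hc' : c' ≠ c := by
              intro e
              exact hc (Set.mem_iUnion.2 ⟨i, by simp [hts, Term.consts, e]⟩)
            show (@ite _ (c' = c) (Classical.propDecidable _) d (M.I w.1 c')) = M.I w.1 c'
            rw [if_neg hc']
      rw [he]
      exact Iff.rfl
  | and φ ψ ihφ ihψ =>
      intro w g hc
      exact and_congr (ihφ w g fun h => hc (Or.inl h)) (ihψ w g fun h => hc (Or.inr h))
  | dia φ ih =>
      intro w g hc
      constructor
      · rintro ⟨v, hwv, Hv⟩
        exact ⟨v.1, hwv, (ih v g hc).1 Hv⟩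
      · rintro ⟨v, hwv, Hv⟩
        have hv : v = r ∨ M.R r v := by
          rcases w.2 with h | h
          · exact Or.inr (h ▸ hwv)
          · exact Or.inr (hM.2.1 r w.1 v h hwv)
        exact ⟨⟨v, hv⟩, hwv, (ih ⟨v, hv⟩ g hc).2 Hv⟩
  | all x φ ih =>
      intro w g hc
      constructor
      · intro H k hk hkalt
        exact (ih w k hc).1 (H k hk hkalt)
      · intro H k hk hkalt
        exact (ih w k hc).2 (H k hk hkalt)

end SoundnessAux

/-- Relational soundness of QRC₁. -/
theorem qrc1_relational_soundness (Sig : Signature) (φ ψ : Formula Sig)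
    (h : Derives φ ψ) :
    ∀ (M : Model Sig), M.Adequate → ∀ (w : M.W) (g : ℕ → M.U),
      M.IsAssignment w g → M.Forces w g φ → M.Forces w g ψ := by
  induction h with
  | topIntro φ => intro M hM w g hg _; trivial
  | refl φ => intro M hM w g hg H; exact H
  | andE₁ φ ψ => intro M hM w g hg H; exact H.1
  | andE₂ φ ψ => intro M hM w g hg H; exact H.2
  | andI h1 h2 ih1 ih2 =>
      intro M hM w g hg H
      exact ⟨ih1 M hM w g hg H, ih2 M hM w g hg H⟩
  | cut h1 h2 ih1 ih2 =>
      intro M hM w g hg H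
      exact ih2 M hM w g hg (ih1 M hM w g hg H)
  | nec h ih =>
      rintro M hM w g hg ⟨v, hwv, Hv⟩
      exact ⟨v, hwv, ih M hM v g (isAssignment_mono hM hwv hg) Hv⟩
  | diaTrans φ =>
      rintro M hM w g hg ⟨v, hwv, u, hvu, Hu⟩
      exact ⟨u, hM.2.1 w v u hwv hvu, Hu⟩
  | diaAll x φ =>
      rintro M hM w g hg ⟨v, hwv, Hv⟩ k hk hkalt
      exact ⟨v, hwv, Hv k (isAssignment_mono hM hwv hk) hkalt⟩
  | @allR φ' ψ' x hder hx ih =>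
      intro M hM w g hg H k hk hkalt
      refine ih M hM w k hk ?_
      refine forces_fv hM φ' w g k hg hk ?_ H
      intro z hz
      refine hkalt z ?_
      simp only [Set.mem_singleton_iff]
      rintro rfl
      exact hx hz
  | @allL φ' ψ' x t hder hff ih =>
      intro M hM w g hg H
      have hd : M.tval w g t ∈ M.D w := tval_mem hg t
      have hk : M.IsAssignment w (Function.update g x (M.tval w g t)) :=
        isAssignment_update hg hd
      have halt : AltOn {x} g (Function.update g x (M.tval w g t)) := by
        intro z hz
        have hzx : z ≠ x := by simpa using hz
        rw [Function.update_apply, if_neg hzx]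
      have H1 : M.Forces w (Function.update g x (M.tval w g t)) φ' :=
        H _ hk halt
      exact ih M hM w g hg ((forces_subst hM φ' x t w g hff hg).2 H1)
  | @termInst φ' ψ' x t hder hffφ hffψ ih =>
      intro M hM w g hg H
      have hd : M.tval w g t ∈ M.D w := tval_mem hg t
      have hk : M.IsAssignment w (Function.update g x (M.tval w g t)) :=
        isAssignment_update hg hd
      have H1 := (forces_subst hM φ' x t w g hffφ hg).1 H
      have H2 := ih M hM w _ hk H1
      exact (forces_subst hM ψ' x t w g hffψ hg).2 H2
  | @constGen φ' ψ' x c hder hcφ hcψ ih =>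
      intro M hM w g hg H
      set M' := M.restrictSubst w c (g x) (hg x) hM.1 with hM'def
      have hM' : M'.Adequate := restrictSubst_adequate hM w c (g x) (hg x)
      set w' : M'.W := ⟨w, Or.inl rfl⟩ with hw'def
      have hg' : M'.IsAssignment w' g := hg
      have H1 : M'.Forces w' g φ' :=
        (restrictSubst_forces hM w c (g x) (hg x) φ' w' g hcφ).2 H
      have htv : M'.tval w' g (Term.const c) = g x := by
        show (@ite _ (c = c) (Classical.propDecidable _) (g x) (M.I w c)) = g x
        rw [if_pos rfl]
      have hupd : (Function.update g x (g x) : ℕ → M'.U) = g := Function.update_eq_self x g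
      have H2 : M'.Forces w' g (φ'.subst x (Term.const c)) := by
        rw [forces_subst hM' φ' x (Term.const c) w' g (Formula.freeFor_const φ' x c) hg',
          htv, hupd]
        exact H1
      have H3 := ih M' hM' w' g hg' H2
      have H4 : M'.Forces w' g ψ' := by
        have H5 := (forces_subst hM' ψ' x (Term.const c) w' g
          (Formula.freeFor_const ψ' x c) hg').1 H3
        rwa [htv, hupd] at H5
      exact (restrictSubst_forces hM w c (g x) (hg x) ψ' w' g hcψ).1 H4
end

section
/- Pair existence lemma for QRC₁: let Σ be a signature with a finite set of constants C, and Φ a finite set of closed formulas in the language of Σ. If p is a Cl_C(Φ)-maximal consistent and fully witnessed pair and ◇φ ∈ p⁺, then there exist a finite set of constants D ⊇ C and a Cl_D(Φ)-maximal consistent and fully witnessed pair q such that pR̂q, φ ∈ q⁺, and mdepth(q⁺) < mdepth(p⁺). -/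
section QrcAux

variable {Sig : Signature}

theorem qrc_tm_mdepth_aux : True := trivial

theorem qrc_mdepth_subst (φ : Formula Sig) (x : ℕ) (t : Term Sig) :
    (φ.subst x t).mdepth = φ.mdepth := by
  induction φ with
  | top => rfl
  | rel S ts => rfl
  | and φ ψ ihφ ihψ => simp [Formula.subst, Formula.mdepth, ihφ, ihψ]
  | dia φ ih => simp [Formula.subst, Formula.mdepth, ih]
  | all y φ ih => by_cases h : y = x <;> simp [Formula.subst, Formula.mdepth, h, ih]

theorem qrc_tfv_subst (t : Term Sig) (x : ℕ) (c : Sig.Const) :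
    (t.subst x (.const c)).fv ⊆ t.fv \ {x} := by
  cases t with
  | var y =>
      by_cases h : y = x <;> simp [Term.subst, Term.fv, h]
  | const d => simp [Term.subst, Term.fv]

theorem qrc_fv_subst (φ : Formula Sig) (x : ℕ) (c : Sig.Const) :
    (φ.subst x (.const c)).fv ⊆ φ.fv \ {x} := by
  induction φ with
  | top => simp [Formula.subst, Formula.fv]
  | rel S ts =>
      simp only [Formula.subst, Formula.fv]
      exact Set.iUnion_subset fun i =>
        (qrc_tfv_subst _ _ _).trans (Set.diff_subset_diff_left (Set.subset_iUnion (fun j => (ts j).fv) i))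
  | and φ ψ ihφ ihψ =>
      simp only [Formula.subst, Formula.fv]
      intro z hz
      rcases hz with hz | hz
      · exact Set.diff_subset_diff_left Set.subset_union_left (ihφ hz)
      · exact Set.diff_subset_diff_left Set.subset_union_right (ihψ hz)
  | dia φ ih => exact ih
  | all y φ ih =>
      by_cases h : y = x
      · subst h
        simp only [Formula.subst, if_pos rfl, Formula.fv]
        intro z hz
        exact ⟨hz, hz.2⟩
      · simp only [Formula.subst, if_neg h, Formula.fv]
        intro z hz
        have h1 := ih hz.1
        exact ⟨⟨h1.1, hz.2⟩, h1.2⟩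

theorem qrc_tconsts_subst (t : Term Sig) (x : ℕ) (c : Sig.Const) :
    (t.subst x (.const c)).consts ⊆ t.consts ∪ {c} := by
  cases t with
  | var y => by_cases h : y = x <;> simp [Term.subst, Term.consts, h]
  | const d => simp [Term.subst, Term.consts]

theorem qrc_consts_subst (φ : Formula Sig) (x : ℕ) (c : Sig.Const) :
    (φ.subst x (.const c)).consts ⊆ φ.consts ∪ {c} := by
  induction φ with
  | top => simp [Formula.subst, Formula.consts]
  | rel S ts =>
      simp only [Formula.subst, Formula.consts]
      exact Set.iUnion_subset fun i =>
        (qrc_tconsts_subst _ _ _).trans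
          (Set.union_subset_union_left _ (Set.subset_iUnion (fun j => (ts j).consts) i))
  | and φ ψ ihφ ihψ =>
      simp only [Formula.subst, Formula.consts]
      intro z hz
      rcases hz with hz | hz
      · rcases ihφ hz with h | h
        · exact Or.inl (Or.inl h)
        · exact Or.inr h
      · rcases ihψ hz with h | h
        · exact Or.inl (Or.inr h)
        · exact Or.inr h
  | dia φ ih => exact ih
  | all y φ ih =>
      by_cases h : y = x
      · simp [Formula.subst, h, Formula.consts]
      · simp only [Formula.subst, if_neg h, Formula.consts]
        exact ih

theorem qrc_tsubst_id (t : Term Sig) (x : ℕ) (u : Term Sig) (h : x ∉ t.fv) :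
    t.subst x u = t := by
  cases t with
  | var y =>
      simp [Term.fv] at h
      simp [Term.subst, Ne.symm h]
  | const d => rfl

theorem qrc_subst_id (φ : Formula Sig) (x : ℕ) (u : Term Sig) (h : x ∉ φ.fv) :
    φ.subst x u = φ := by
  induction φ with
  | top => rfl
  | rel S ts =>
      simp only [Formula.fv, Set.mem_iUnion, not_exists] at h
      simp only [Formula.subst]
      congr 1
      funext i
      exact qrc_tsubst_id _ _ _ (h i)
  | and φ ψ ihφ ihψ =>
      simp only [Formula.fv, Set.mem_union, not_or] at h
      simp [Formula.subst, ihφ h.1, ihψ h.2]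
  | dia φ ih =>
      simp only [Formula.fv] at h
      simp [Formula.subst, ih h]
  | all y φ ih =>
      by_cases hyx : y = x
      · simp [Formula.subst, hyx]
      · simp only [Formula.fv, Set.mem_diff, Set.mem_singleton_iff] at h
        have : x ∉ φ.fv := fun hx => h ⟨hx, Ne.symm hyx⟩
        simp [Formula.subst, hyx, ih this]

/-- Induction principle matching the recursion of `Cl`. -/
theorem qrc_formula_rec (P : Formula Sig → Prop)
    (htop : P .top) (hrel : ∀ S ts, P (.rel S ts))
    (hand : ∀ φ ψ, P φ → P ψ → P (.and φ ψ))
    (hdia : ∀ φ, P φ → P (.dia φ))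
    (hall : ∀ x φ, (∀ c : Sig.Const, P (φ.subst x (.const c))) → P (.all x φ)) :
    ∀ φ, P φ := by
  have key : ∀ n (φ : Formula Sig), φ.size ≤ n → P φ := by
    intro n
    induction n with
    | zero => intro φ h; cases φ <;> simp [Formula.size] at h
    | succ n ih =>
      intro φ h
      cases φ with
      | top => exact htop
      | rel S ts => exact hrel S ts
      | and φ ψ =>
          refine hand φ ψ (ih φ ?_) (ih ψ ?_) <;> (simp [Formula.size] at h; omega)
      | dia φ => exact hdia φ (ih φ (by simp [Formula.size] at h; omega))
      | all x φ =>
          exact hall x φ (fun c => ih _ (by rw [Formula.size_subst]; simp [Formula.size] at h; omega))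
  exact fun φ => key φ.size φ le_rfl

theorem qrc_self_mem_Cl {C : Set Sig.Const} (θ : Formula Sig) : θ ∈ Cl C θ := by
  cases θ <;> simp [Cl]

theorem qrc_Cl_mono {C D : Set Sig.Const} (hCD : C ⊆ D) :
    ∀ θ : Formula Sig, Cl C θ ⊆ Cl D θ := by
  intro θ
  induction θ using qrc_formula_rec with
  | htop => simp [Cl]
  | hrel S ts => simp [Cl]
  | hand φ ψ ihφ ihψ =>
      intro χ hχ
      simp only [Cl, Set.mem_union, Set.mem_singleton_iff] at hχ ⊢
      rcases hχ with (h | h) | h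
      · exact Or.inl (Or.inl h)
      · exact Or.inl (Or.inr (ihφ h))
      · exact Or.inr (ihψ h)
  | hdia φ ih =>
      intro χ hχ
      simp only [Cl, Set.mem_union, Set.mem_singleton_iff] at hχ ⊢
      rcases hχ with h | h
      · exact Or.inl h
      · exact Or.inr (ih h)
  | hall x φ ih =>
      intro χ hχ
      simp only [Cl, Set.mem_union, Set.mem_singleton_iff, Set.mem_iUnion] at hχ ⊢
      rcases hχ with h | ⟨c, hc, h⟩
      · exact Or.inl h
      · exact Or.inr ⟨c, hCD hc, ih c h⟩

theorem qrc_Cl_mdepth {C : Set Sig.Const} :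
    ∀ θ : Formula Sig, ∀ χ ∈ Cl C θ, χ.mdepth ≤ θ.mdepth := by
  intro θ
  induction θ using qrc_formula_rec with
  | htop => intro χ hχ; simp [Cl] at hχ; subst hχ; exact le_refl _
  | hrel S ts =>
      intro χ hχ
      simp only [Cl, Set.mem_insert_iff, Set.mem_singleton_iff] at hχ
      rcases hχ with h | h <;> subst h <;> simp [Formula.mdepth]
  | hand φ ψ ihφ ihψ =>
      intro χ hχ
      simp only [Cl, Set.mem_union, Set.mem_singleton_iff] at hχ
      rcases hχ with (h | h) | h
      · subst h; exact le_refl _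
      · exact (ihφ χ h).trans (le_max_left _ _)
      · exact (ihψ χ h).trans (le_max_right _ _)
  | hdia φ ih =>
      intro χ hχ
      simp only [Cl, Set.mem_union, Set.mem_singleton_iff] at hχ
      rcases hχ with h | h
      · subst h; exact le_refl _
      · exact (ih χ h).trans (Nat.le_succ _)
  | hall x φ ih =>
      intro χ hχ
      simp only [Cl, Set.mem_union, Set.mem_singleton_iff, Set.mem_iUnion] at hχ
      rcases hχ with h | ⟨c, hc, h⟩
      · subst h; exact le_refl _
      · have := ih c χ h
        rwa [qrc_mdepth_subst] at this

theorem qrc_Cl_fv {C : Set Sig.Const} :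
    ∀ θ : Formula Sig, ∀ χ ∈ Cl C θ, χ.fv ⊆ θ.fv := by
  intro θ
  induction θ using qrc_formula_rec with
  | htop => intro χ hχ; simp [Cl] at hχ; subst hχ; exact subset_rfl
  | hrel S ts =>
      intro χ hχ
      simp only [Cl, Set.mem_insert_iff, Set.mem_singleton_iff] at hχ
      rcases hχ with h | h <;> subst h
      · exact subset_rfl
      · simp [Formula.fv]
  | hand φ ψ ihφ ihψ =>
      intro χ hχ
      simp only [Cl, Set.mem_union, Set.mem_singleton_iff] at hχ
      rcases hχ with (h | h) | h
      · subst h; exact subset_rfl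
      · exact (ihφ χ h).trans Set.subset_union_left
      · exact (ihψ χ h).trans Set.subset_union_right
  | hdia φ ih =>
      intro χ hχ
      simp only [Cl, Set.mem_union, Set.mem_singleton_iff] at hχ
      rcases hχ with h | h
      · subst h; exact subset_rfl
      · exact ih χ h
  | hall x φ ih =>
      intro χ hχ
      simp only [Cl, Set.mem_union, Set.mem_singleton_iff, Set.mem_iUnion] at hχ
      rcases hχ with h | ⟨c, hc, h⟩
      · subst h; exact subset_rfl
      · exact (ih c χ h).trans (qrc_fv_subst φ x c)

theorem qrc_Cl_consts {C : Set Sig.Const} :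
    ∀ θ : Formula Sig, ∀ χ ∈ Cl C θ, χ.consts ⊆ θ.consts ∪ C := by
  intro θ
  induction θ using qrc_formula_rec with
  | htop => intro χ hχ; simp [Cl] at hχ; subst hχ; simp [Formula.consts]
  | hrel S ts =>
      intro χ hχ
      simp only [Cl, Set.mem_insert_iff, Set.mem_singleton_iff] at hχ
      rcases hχ with h | h <;> subst h
      · exact Set.subset_union_left
      · simp [Formula.consts]
  | hand φ ψ ihφ ihψ =>
      intro χ hχ
      simp only [Cl, Set.mem_union, Set.mem_singleton_iff] at hχ
      rcases hχ with (h | h) | h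
      · subst h; exact Set.subset_union_left
      · exact (ihφ χ h).trans (Set.union_subset_union_left _ Set.subset_union_left)
      · exact (ihψ χ h).trans (Set.union_subset_union_left _ Set.subset_union_right)
  | hdia φ ih =>
      intro χ hχ
      simp only [Cl, Set.mem_union, Set.mem_singleton_iff] at hχ
      rcases hχ with h | h
      · subst h; exact Set.subset_union_left
      · exact ih χ h
  | hall x φ ih =>
      intro χ hχ
      simp only [Cl, Set.mem_union, Set.mem_singleton_iff, Set.mem_iUnion] at hχ
      rcases hχ with h | ⟨c, hc, h⟩
      · subst h; exact Set.subset_union_left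
      · refine (ih c χ h).trans ?_
        intro z hz
        rcases hz with hz | hz
        · rcases qrc_consts_subst φ x c hz with h' | h'
          · exact Or.inl h'
          · exact Or.inr (by rcases h' with rfl; exact hc)
        · exact Or.inr hz

theorem qrc_Cl_dia {C : Set Sig.Const} :
    ∀ θ : Formula Sig, ∀ χ : Formula Sig, Formula.dia χ ∈ Cl C θ → χ ∈ Cl C θ := by
  intro θ
  induction θ using qrc_formula_rec with
  | htop => intro χ hχ; simp [Cl] at hχ
  | hrel S ts => intro χ hχ; simp [Cl] at hχ
  | hand φ ψ ihφ ihψ =>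
      intro χ hχ
      simp only [Cl, Set.mem_union, Set.mem_singleton_iff] at hχ ⊢
      rcases hχ with (h | h) | h
      · exact absurd h (by simp)
      · exact Or.inl (Or.inr (ihφ χ h))
      · exact Or.inr (ihψ χ h)
  | hdia φ ih =>
      intro χ hχ
      simp only [Cl, Set.mem_union, Set.mem_singleton_iff] at hχ ⊢
      rcases hχ with h | h
      · injection h with h'
        exact Or.inr (by rw [h']; exact qrc_self_mem_Cl φ)
      · exact Or.inr (ih χ h)
  | hall x φ ih =>
      intro χ hχ
      simp only [Cl, Set.mem_union, Set.mem_singleton_iff, Set.mem_iUnion] at hχ ⊢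
      rcases hχ with h | ⟨c, hc, h⟩
      · exact absurd h (by simp)
      · exact Or.inr ⟨c, hc, ih c χ h⟩

theorem qrc_Cl_all {C : Set Sig.Const} :
    ∀ θ : Formula Sig, ∀ (x : ℕ) (ψ : Formula Sig) (c : Sig.Const), c ∈ C →
      Formula.all x ψ ∈ Cl C θ → ψ.subst x (.const c) ∈ Cl C θ := by
  intro θ
  induction θ using qrc_formula_rec with
  | htop => intro x ψ c hc h; simp [Cl] at h
  | hrel S ts => intro x ψ c hc h; simp [Cl] at h
  | hand φ ψ' ihφ ihψ =>
      intro x ψ c hc h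
      simp only [Cl, Set.mem_union, Set.mem_singleton_iff] at h ⊢
      rcases h with (h | h) | h
      · exact absurd h (by simp)
      · exact Or.inl (Or.inr (ihφ x ψ c hc h))
      · exact Or.inr (ihψ x ψ c hc h)
  | hdia φ ih =>
      intro x ψ c hc h
      simp only [Cl, Set.mem_union, Set.mem_singleton_iff] at h ⊢
      rcases h with h | h
      · exact absurd h (by simp)
      · exact Or.inr (ih x ψ c hc h)
  | hall y φ ih =>
      intro x ψ c hc h
      simp only [Cl, Set.mem_union, Set.mem_singleton_iff, Set.mem_iUnion] at h ⊢
      rcases h with h | ⟨d, hd, h⟩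
      · injection h with h1 h2
        subst h1; subst h2
        exact Or.inr ⟨c, hc, qrc_self_mem_Cl _⟩
      · exact Or.inr ⟨d, hd, ih d x ψ c hc h⟩

theorem qrc_Cl_card {C : Set Sig.Const} :
    ∀ θ : Formula Sig, ∀ χ ∈ Cl C θ,
      ∃ F : Finset Sig.Const, χ.consts ⊆ θ.consts ∪ ↑F ∧ F.card ≤ θ.size := by
  classical
  intro θ
  induction θ using qrc_formula_rec with
  | htop =>
      intro χ hχ; simp [Cl] at hχ; subst hχ
      exact ⟨∅, by simp [Formula.consts], by simp⟩
  | hrel S ts =>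
      intro χ hχ
      simp only [Cl, Set.mem_insert_iff, Set.mem_singleton_iff] at hχ
      rcases hχ with h | h <;> subst h
      · exact ⟨∅, by simp, by simp⟩
      · exact ⟨∅, by simp [Formula.consts], by simp⟩
  | hand φ ψ ihφ ihψ =>
      intro χ hχ
      simp only [Cl, Set.mem_union, Set.mem_singleton_iff] at hχ
      rcases hχ with (h | h) | h
      · subst h; exact ⟨∅, by simp, by simp⟩
      · obtain ⟨F, h1, h2⟩ := ihφ χ h
        exact ⟨F, h1.trans (Set.union_subset_union_left _ Set.subset_union_left),
          h2.trans (by simp [Formula.size]; omega)⟩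
      · obtain ⟨F, h1, h2⟩ := ihψ χ h
        exact ⟨F, h1.trans (Set.union_subset_union_left _ Set.subset_union_right),
          h2.trans (by simp [Formula.size]; omega)⟩
  | hdia φ ih =>
      intro χ hχ
      simp only [Cl, Set.mem_union, Set.mem_singleton_iff] at hχ
      rcases hχ with h | h
      · subst h; exact ⟨∅, by simp, by simp⟩
      · obtain ⟨F, h1, h2⟩ := ih χ h
        exact ⟨F, h1, h2.trans (by simp [Formula.size])⟩
  | hall x φ ih =>
      intro χ hχ
      simp only [Cl, Set.mem_union, Set.mem_singleton_iff, Set.mem_iUnion] at hχ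
      rcases hχ with h | ⟨c, hc, h⟩
      · subst h; exact ⟨∅, by simp, by simp⟩
      · obtain ⟨F, h1, h2⟩ := ih c χ h
        refine ⟨insert c F, ?_, ?_⟩
        · refine h1.trans ?_
          intro z hz
          rcases hz with hz | hz
          · rcases qrc_consts_subst φ x c hz with h' | h'
            · exact Or.inl h'
            · exact Or.inr (by simp [Set.mem_singleton_iff.mp h'])
          · exact Or.inr (by simp [hz])
        · rw [Formula.size_subst] at h2
          calc (insert c F).card ≤ F.card + 1 := Finset.card_insert_le _ _
            _ ≤ φ.size + 1 := by omega
            _ = (Formula.all x φ).size := rfl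

theorem qrc_derives_foldl (φ : Formula Sig) :
    ∀ (l : List (Formula Sig)) (γ : Formula Sig), Derives φ γ →
      (∀ δ ∈ l, Derives φ δ) → Derives φ (l.foldl Formula.and γ) := by
  intro l
  induction l with
  | nil => intro γ hγ _; exact hγ
  | cons δ l ih =>
      intro γ hγ hl
      exact ih _ (Derives.andI hγ (hl δ (by simp))) (fun δ' hδ' => hl δ' (by simp [hδ']))

theorem qrc_mdepth_le_of_derives {φ ψ : Formula Sig} (h : Derives φ ψ) :
    ψ.mdepth ≤ φ.mdepth := by
  induction h with
  | topIntro φ => simp [Formula.mdepth]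
  | refl φ => exact le_refl _
  | andE₁ φ ψ => exact le_max_left _ _
  | andE₂ φ ψ => exact le_max_right _ _
  | andI h1 h2 ih1 ih2 => exact max_le ih1 ih2
  | cut h1 h2 ih1 ih2 => exact ih2.trans ih1
  | nec h ih => simpa [Formula.mdepth] using Nat.succ_le_succ ih
  | diaTrans φ => simp [Formula.mdepth]
  | diaAll x φ => simp [Formula.mdepth]
  | allR h hx ih => exact ih
  | allL h hf ih => exact ih.trans (le_of_eq (qrc_mdepth_subst _ _ _))
  | termInst h hf1 hf2 ih => rw [qrc_mdepth_subst, qrc_mdepth_subst]; exact ih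
  | constGen h hc1 hc2 ih => rwa [qrc_mdepth_subst, qrc_mdepth_subst] at ih

end QrcAux
/-- Pair existence lemma for QRC₁: if p is Cl_C(Φ)-maximal consistent and
fully witnessed with ◇φ ∈ p⁺, then there are a finite D ⊇ C and a Cl_D(Φ)-maximal
consistent fully witnessed pair q with pR̂q, φ ∈ q⁺, and mdepth(q⁺) < mdepth(p⁺). -/
theorem qrc1_pair_existence (Sig : Signature) [Infinite Sig.Const]
    (C : Set Sig.Const) (hC : C.Finite)
    (Φ : Set (Formula Sig)) (hΦfin : Φ.Finite)
    (hΦ : ∀ χ ∈ Φ, χ.fv = ∅ ∧ χ.consts ⊆ C)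
    (p : Pair Sig) (hp : p.MaxCons (ClSet C Φ)) (hwit : p.FullyWitnessed)
    (φ : Formula Sig) (hφ : Formula.dia φ ∈ p.pos) :
    ∃ (D : Set Sig.Const) (q : Pair Sig),
      C ⊆ D ∧ D.Finite ∧ q.MaxCons (ClSet D Φ) ∧ q.FullyWitnessed ∧
      hatR p q ∧ φ ∈ q.pos ∧ mdepthSet q.pos < mdepthSet p.pos := by
  classical
  obtain ⟨hpcons, hppos, hpneg, hpmax⟩ := hp
  -- the formula `◇φ` comes from the closure of some `θ₀ ∈ Φ`
  obtain ⟨θ₀, hθ₀Φ, hθ₀⟩ : ∃ θ ∈ Φ, Formula.dia φ ∈ Cl C θ := by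
    have := hppos hφ
    simpa [ClSet] using this
  have hφCl : φ ∈ Cl C θ₀ := qrc_Cl_dia θ₀ φ hθ₀
  have hφfv : φ.fv = ∅ := by
    have h1 : (Formula.dia φ).fv ⊆ θ₀.fv := qrc_Cl_fv θ₀ _ hθ₀
    rw [(hΦ θ₀ hθ₀Φ).1] at h1
    exact Set.subset_empty_iff.mp h1
  have hφconsts : φ.consts ⊆ C := by
    have h1 : (Formula.dia φ).consts ⊆ θ₀.consts ∪ C := qrc_Cl_consts θ₀ _ hθ₀
    intro z hz
    rcases h1 hz with h | h
    · exact (hΦ θ₀ hθ₀Φ).2 h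
    · exact h
  -- fresh constants
  set B := hΦfin.toFinset.sup Formula.size with hB
  obtain ⟨E, hEsub, hEcard⟩ := (hC.infinite_compl).exists_subset_card_eq (B + 1)
  set D := C ∪ ↑E with hD
  have hCD : C ⊆ D := Set.subset_union_left
  have hDfin : D.Finite := hC.union E.finite_toSet
  have hClmono : ClSet C Φ ⊆ ClSet D Φ := by
    intro χ hχ
    simp only [ClSet, Set.mem_iUnion] at hχ ⊢
    obtain ⟨θ, hθ, h⟩ := hχ
    exact ⟨θ, hθ, qrc_Cl_mono hCD θ h⟩
  -- the pair q
  refine ⟨D, ⟨{χ | χ ∈ ClSet D Φ ∧ Derives φ χ}, {χ | χ ∈ ClSet D Φ ∧ ¬ Derives φ χ}⟩,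
    hCD, hDfin, ?_, ?_, ?_, ?_, ?_⟩
  · -- MaxCons
    have hSD : ∀ δ :
        Formula Sig, SetDerives {χ | χ ∈ ClSet D Φ ∧ Derives φ χ} δ → Derives φ δ := by
      rintro δ ⟨γ, l, hγ, hl, hder⟩
      exact Derives.cut (qrc_derives_foldl φ l γ hγ.2 (fun δ' h' => (hl δ' h').2)) hder
    have hqcons : Pair.Consistent
        ⟨{χ | χ ∈ ClSet D Φ ∧ Derives φ χ}, {χ | χ ∈ ClSet D Φ ∧ ¬ Derives φ χ}⟩ :=
      fun δ hδ hsd => hδ.2 (hSD δ hsd)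
    refine ⟨hqcons, fun χ h => h.1, fun χ h => h.1, ?_⟩
    rintro ⟨rp, rn⟩ ⟨hpos, hposΦ, hneg, hnegΦ⟩ hrcons
    have h1 : rp = {χ | χ ∈ ClSet D Φ ∧ Derives φ χ} := by
      refine Set.Subset.antisymm ?_ hpos
      intro χ hχ
      refine ⟨hposΦ hχ, ?_⟩
      by_contra hnd
      exact hrcons χ (hneg ⟨hposΦ hχ, hnd⟩) ⟨χ, [], hχ, by simp, Derives.refl χ⟩
    have h2 : rn = {χ | χ ∈ ClSet D Φ ∧ ¬ Derives φ χ} := by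
      refine Set.Subset.antisymm ?_ hneg
      intro χ hχ
      refine ⟨hnegΦ hχ, ?_⟩
      intro hd
      exact hrcons χ hχ ⟨χ, [], hpos ⟨hnegΦ hχ, hd⟩, by simp, Derives.refl χ⟩
    rw [h1, h2]
  · -- FullyWitnessed
    intro x ψ hψ
    obtain ⟨hψCl, hψnd⟩ := hψ
    obtain ⟨θ, hθΦ, hθ⟩ : ∃ θ ∈ Φ, Formula.all x ψ ∈ Cl D θ := by
      simpa [ClSet] using hψCl
    obtain ⟨F, hF1, hF2⟩ := qrc_Cl_card θ _ hθ
    have hcard : F.card < E.card := by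
      rw [hEcard]
      have hsz : θ.size ≤ B := Finset.le_sup (hΦfin.mem_toFinset.mpr hθΦ)
      omega
    obtain ⟨e, heE, heF⟩ : ∃ e ∈ E, e ∉ F := by
      by_contra hcon
      push_neg at hcon
      exact absurd (Finset.card_le_card hcon) (not_le.mpr hcard)
    have heC : e ∉ C := by simpa using hEsub heE
    have heψ : e ∉ ψ.consts := by
      intro hmem
      have hmem' : e ∈ θ.consts ∪ ↑F := hF1 hmem
      rcases hmem' with h | h
      · exact heC ((hΦ θ hθΦ).2 h)
      · exact heF (by exact_mod_cast h)
    have heD : e ∈ D := Or.inr heE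
    have hmemCl : ψ.subst x (.const e) ∈ ClSet D Φ := by
      simp only [ClSet, Set.mem_iUnion]
      exact ⟨θ, hθΦ, qrc_Cl_all θ x ψ e heD hθ⟩
    refine ⟨e, hmemCl, ?_⟩
    intro hder
    apply hψnd
    have hsub : φ.subst x (.const e) = φ := qrc_subst_id φ x _ (by simp [hφfv])
    have hψd : Derives φ ψ :=
      Derives.constGen (by rwa [hsub]) (fun h => heC (hφconsts h)) heψ
    exact Derives.allR hψd (by simp [hφfv])
  · -- hatR
    constructor
    · intro ψ hψn
      have hdiaCl : Formula.dia ψ ∈ ClSet D Φ := hClmono (hpneg hψn)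
      have hψCl' : ψ ∈ ClSet D Φ := by
        simp only [ClSet, Set.mem_iUnion] at hdiaCl ⊢
        obtain ⟨θ, hθ, h⟩ := hdiaCl
        exact ⟨θ, hθ, qrc_Cl_dia θ ψ h⟩
      have h1 : ¬ Derives φ ψ := by
        intro h
        exact hpcons _ hψn ⟨Formula.dia φ, [], hφ, by simp, Derives.nec h⟩
      have h2 : ¬ Derives φ (Formula.dia ψ) := by
        intro h
        exact hpcons _ hψn
          ⟨Formula.dia φ, [], hφ, by simp, Derives.cut (Derives.nec h) (Derives.diaTrans ψ)⟩
      exact ⟨⟨hψCl', h1⟩, ⟨hdiaCl, h2⟩⟩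
    · refine ⟨φ, hφ, ⟨hClmono (hppos hφ), ?_⟩⟩
      intro h
      have hle := qrc_mdepth_le_of_derives h
      simp [Formula.mdepth] at hle
  · -- φ ∈ q.pos
    refine ⟨?_, Derives.refl φ⟩
    apply hClmono
    simp only [ClSet, Set.mem_iUnion]
    exact ⟨θ₀, hθ₀Φ, hφCl⟩
  · -- modal depth decreases
    have h1 : mdepthSet {χ | χ ∈ ClSet D Φ ∧ Derives φ χ} ≤ φ.mdepth := by
      refine csSup_le' ?_
      rintro m ⟨χ, hχ, rfl⟩
      exact qrc_mdepth_le_of_derives hχ.2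
    have hbdd : BddAbove (Formula.mdepth '' p.pos) := by
      refine ⟨hΦfin.toFinset.sup Formula.mdepth, ?_⟩
      rintro m ⟨χ, hχ, rfl⟩
      have hχ' := hppos hχ
      simp only [ClSet, Set.mem_iUnion] at hχ'
      obtain ⟨θ, hθΦ, hθ⟩ := hχ'
      exact (qrc_Cl_mdepth θ χ hθ).trans (Finset.le_sup (hΦfin.mem_toFinset.mpr hθΦ))
    have h2 : (Formula.dia φ).mdepth ≤ mdepthSet p.pos :=
      le_csSup hbdd ⟨_, hφ, rfl⟩
    have h3 : (Formula.dia φ).mdepth = φ.mdepth + 1 := rfl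
    simp only [mdepthSet] at h1 h2 ⊢
    omega
end
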